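/- arXiv:1908.09027 — 4 statements merged into one kernel-verified Lean document; each statement's English description precedes it below -/
import Mathlib

section
/- For all natural numbers n < M, the alternating sum ∑_{i=1}^{M} C(M,i) · C(i-1,n) · (-1)^i equals (-1)^{n+1}, where C(m,n) = 0 whenever n > m. -/
open Finset

lemma key_sum (M n : ℕ) (h : n < M) :
    ∑ j ∈ Finset.range (M + 1), (M.choose j : ℤ) * (j.choose n : ℤ) * (-1) ^ j = 0 := by
  have hsplit : Finset.range (M + 1) = Finset.range n ∪ Finset.Ico n (M + 1) := by
    rw [Finset.range_eq_Ico, Finset.range_eq_Ico, Finset.Ico_union_Ico_eq_Ico] <;> omega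
  rw [hsplit, Finset.sum_union (by
    rw [Finset.range_eq_Ico]; exact Finset.Ico_disjoint_Ico_consecutive 0 n (M+1))]
  have h1 : ∑ j ∈ Finset.range n, (M.choose j : ℤ) * (j.choose n : ℤ) * (-1) ^ j = 0 := by
    apply Finset.sum_eq_zero
    intro j hj
    rw [Finset.mem_range] at hj
    rw [Nat.choose_eq_zero_of_lt hj]
    simp
  rw [h1, zero_add]
  rw [Finset.sum_Ico_eq_sum_range]
  have h2 : ∀ k ∈ Finset.range (M + 1 - n),
      (M.choose (n + k) : ℤ) * ((n + k).choose n : ℤ) * (-1) ^ (n + k)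
        = (M.choose n : ℤ) * (-1) ^ n * (((M - n).choose k : ℤ) * (-1) ^ k) := by
    intro k hk
    rw [Finset.mem_range] at hk
    have hc : M.choose (n + k) * (n + k).choose n = M.choose n * (M - n).choose k := by
      have := Nat.choose_mul (n := M) (k := n + k) (s := n) (by omega)
      simpa using this
    have : (M.choose (n + k) : ℤ) * ((n + k).choose n : ℤ)
        = (M.choose n : ℤ) * ((M - n).choose k : ℤ) := by exact_mod_cast congrArg Nat.cast hc
    rw [pow_add]
    linear_combination ((-1:ℤ)^n * (-1)^k) * this
  rw [Finset.sum_congr rfl h2, ← Finset.mul_sum]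
  have h3 : ∑ k ∈ Finset.range (M + 1 - n), ((M - n).choose k : ℤ) * (-1) ^ k = 0 := by
    have hMn : M - n ≠ 0 := by omega
    have := Int.alternating_sum_range_choose_of_ne hMn
    have hr : M + 1 - n = (M - n) + 1 := by omega
    rw [hr, ← this]
    apply Finset.sum_congr rfl
    intro k _
    ring
  rw [h3, mul_zero]

theorem alternating_sum_binom (M n : ℕ) (h : n < M) :
    ∑ i ∈ Finset.Icc 1 M, (M.choose i : ℤ) * ((i - 1).choose n : ℤ) * (-1) ^ i
      = (-1) ^ (n + 1) := by
  induction M, h using Nat.le_induction with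
  | base =>
    rw [Finset.sum_eq_single (n + 1)]
    · simp
    · intro i hi hne
      rw [Finset.mem_Icc] at hi
      have : i - 1 < n := by omega
      rw [Nat.choose_eq_zero_of_lt this]
      ring
    · intro hmem
      exact absurd (Finset.mem_Icc.mpr ⟨by omega, le_refl _⟩) hmem
  | succ M hM IH =>
    -- reindex: Icc 1 (M+1) → range (M+1)
    rw [show Finset.Icc 1 (M + 1) = Finset.Ico 1 (M + 2) by rfl,
      Finset.sum_Ico_eq_sum_range]
    have hr : M + 2 - 1 = M + 1 := by omega
    rw [hr]
    have step : ∀ k ∈ Finset.range (M + 1),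
        ((M + 1).choose (1 + k) : ℤ) * ((1 + k - 1).choose n : ℤ) * (-1) ^ (1 + k)
          = ((M.choose k : ℤ) + (M.choose (k + 1) : ℤ)) * (k.choose n : ℤ) * (-1) ^ (k + 1) := by
      intro k _
      have : (M + 1).choose (1 + k) = M.choose k + M.choose (k + 1) := by
        rw [add_comm 1 k]
        exact Nat.choose_succ_succ' M k
      rw [this, add_comm 1 k]
      push_cast
      ring_nf
    rw [Finset.sum_congr rfl step]
    have hsplit : ∑ k ∈ Finset.range (M + 1),
        ((M.choose k : ℤ) + (M.choose (k + 1) : ℤ)) * (k.choose n : ℤ) * (-1) ^ (k + 1)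
        = (∑ k ∈ Finset.range (M + 1), (M.choose k : ℤ) * (k.choose n : ℤ) * (-1) ^ (k + 1))
          + ∑ k ∈ Finset.range (M + 1), (M.choose (k + 1) : ℤ) * (k.choose n : ℤ) * (-1) ^ (k + 1) := by
      rw [← Finset.sum_add_distrib]
      apply Finset.sum_congr rfl
      intro k _
      ring
    rw [hsplit]
    have hfirst : ∑ k ∈ Finset.range (M + 1), (M.choose k : ℤ) * (k.choose n : ℤ) * (-1) ^ (k + 1) = 0 := by
      have := key_sum M n hM
      calc ∑ k ∈ Finset.range (M + 1), (M.choose k : ℤ) * (k.choose n : ℤ) * (-1) ^ (k + 1)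
          = -∑ k ∈ Finset.range (M + 1), (M.choose k : ℤ) * (k.choose n : ℤ) * (-1) ^ k := by
            rw [← Finset.sum_neg_distrib]
            apply Finset.sum_congr rfl
            intro k _
            ring
        _ = 0 := by rw [this, neg_zero]
    rw [hfirst, zero_add]
    -- second sum equals IH's sum
    rw [Finset.sum_range_succ, Nat.choose_eq_zero_of_lt (by omega : M < M + 1)]
    simp only [Nat.cast_zero, zero_mul, add_zero]
    rw [← IH]
    rw [show Finset.Icc 1 M = Finset.Ico 1 (M + 1) by rfl, Finset.sum_Ico_eq_sum_range]
    apply Finset.sum_congr (by norm_num)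
    intro k _
    rw [add_comm 1 k]
    simp
end

section
/- Define h_{k;e} = (2k+2e+1)!!/(2e-1)!! for k, e ∈ ℕ, where (2m+1)!! = 1·3·5···(2m+1) and (-1)!! = 1. Then for all k₁, k₂ ≥ -1 and e ∈ ℕ, the identity 2(k₁-k₂)·h_{k₁+k₂;e} = h_{k₁;e}·h_{k₂;k₁+e} - h_{k₂;e}·h_{k₁;k₂+e} holds. -/
/-- `oddDF m = (2m-1)!! = 1·3·…·(2m-1)`, so `oddDF 0 = (-1)!! = 1`. -/
def oddDF (m : ℕ) : ℚ := ∏ j ∈ Finset.range m, (2 * (j : ℚ) + 1)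

/-- `hh k e = (2k+2e+1)!!/(2e-1)!!` for `k ≥ -1`, `e ≥ 0`. -/
def hh (k e : ℤ) : ℚ := oddDF (k + e + 1).toNat / oddDF e.toNat

lemma oddDF_pos (n : ℕ) : 0 < oddDF n := by
  unfold oddDF
  exact Finset.prod_pos fun j _ => by positivity

lemma oddDF_ne_zero (n : ℕ) : oddDF n ≠ 0 := (oddDF_pos n).ne'

lemma oddDF_succ (n : ℕ) : oddDF (n + 1) = oddDF n * (2 * n + 1) :=
  Finset.prod_range_succ _ _

theorem h_commutator_identity (k₁ k₂ : ℤ) (e : ℕ)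
    (hk₁ : -1 ≤ k₁) (hk₂ : -1 ≤ k₂) (hk₁₂ : -1 ≤ k₁ + k₂)
    (h₁e : 0 ≤ k₁ + (e : ℤ)) (h₂e : 0 ≤ k₂ + (e : ℤ)) :
    2 * ((k₁ : ℚ) - k₂) * hh (k₁ + k₂) e
      = hh k₁ e * hh k₂ (k₁ + e) - hh k₂ e * hh k₁ (k₂ + e) := by
  obtain ⟨n₁, hn₁⟩ : ∃ n : ℕ, k₁ + e = n := ⟨(k₁ + e).toNat, (Int.toNat_of_nonneg h₁e).symm⟩
  obtain ⟨n₂, hn₂⟩ : ∃ n : ℕ, k₂ + e = n := ⟨(k₂ + e).toNat, (Int.toNat_of_nonneg h₂e).symm⟩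
  obtain ⟨m, hm⟩ : ∃ m : ℕ, k₁ + k₂ + e + 1 = m :=
    ⟨(k₁ + k₂ + e + 1).toNat, (Int.toNat_of_nonneg (by omega)).symm⟩
  unfold hh
  have t1 : (k₁ + k₂ + (e : ℤ) + 1).toNat = m := by omega
  have t2 : ((e : ℤ)).toNat = e := by omega
  have t3 : (k₁ + (e : ℤ) + 1).toNat = n₁ + 1 := by omega
  have t4 : (k₂ + (k₁ + (e : ℤ)) + 1).toNat = m := by omega
  have t5 : (k₁ + (e : ℤ)).toNat = n₁ := by omega
  have t6 : (k₂ + (e : ℤ) + 1).toNat = n₂ + 1 := by omega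
  have t7 : (k₁ + (k₂ + (e : ℤ)) + 1).toNat = m := by omega
  have t8 : (k₂ + (e : ℤ)).toNat = n₂ := by omega
  rw [t1, t2, t3, t4, t5, t6, t7, t8, oddDF_succ, oddDF_succ]
  have c1 : (k₁ : ℚ) = (n₁ : ℚ) - e := by
    have := congrArg (fun x : ℤ => (x : ℚ)) hn₁; push_cast at this; linarith
  have c2 : (k₂ : ℚ) = (n₂ : ℚ) - e := by
    have := congrArg (fun x : ℤ => (x : ℚ)) hn₂; push_cast at this; linarith
  rw [c1, c2]
  field_simp [oddDF_ne_zero]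
  ring
end

section
/- Let e = (e₁,...,eₙ) be a list of natural numbers and c a natural number. With h_{k;·} defined on lists by inclusion-exclusion, the following inductive identity holds: h_{k;(c,e₁,...,eₙ)} = h_{k;c} + ∑_{∅≠J⊆{1,...,n}} ( h_{k;e_J} - h_{k;(c+|e_J|-#J, e_{J^c})} ), where e_J denotes the sublist indexed by J, |e_J| = ∑_{j∈J}e_j, and e_{J^c} is the complementary sublist. -/
/-- Inclusion–exclusion extension of `hh` to a finite list (multiset of position-choices)
of natural numbers: `h_{k;e} = ∑_{∅≠J} (-1)^{#J-1} h_{k; |e_J| - #J + 1}`, where the sum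
over nonempty subsets of positions is realized as the multiset powerset. -/
def hM (k : ℤ) (s : Multiset ℕ) : ℚ :=
  ((s.powerset.filter (fun t => t ≠ 0)).map
    (fun t => (-1 : ℚ) ^ (t.card - 1) * hh k ((t.sum : ℤ) - t.card + 1))).sum


open Multiset

lemma hM_zero (k : ℤ) : hM k 0 = 0 := by simp [hM, Multiset.filter_singleton]

lemma count_zero_powerset (e : Multiset ℕ) : Multiset.count 0 e.powerset = 1 := by
  induction e using Multiset.induction with
  | empty => simp
  | cons a s ih =>
    rw [powerset_cons, Multiset.count_add, ih,
      Multiset.count_eq_zero.mpr (by simp : (0 : Multiset ℕ) ∉ s.powerset.map (cons a))]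

lemma filter_ne_sum (e : Multiset ℕ) (φ : Multiset ℕ → ℚ) :
    ((e.powerset.filter (fun t => t ≠ 0)).map φ).sum = (e.powerset.map φ).sum - φ 0 := by
  have h := Multiset.filter_add_not (fun t => t ≠ 0) e.powerset
  have h2 : e.powerset.filter (fun t => ¬ t ≠ 0) = {0} := by
    rw [Multiset.filter_congr (fun x _ => by simp [eq_comm] : ∀ x ∈ e.powerset,
      ((fun t => ¬ t ≠ 0) x ↔ (fun t => 0 = t) x)), Multiset.filter_eq,
      count_zero_powerset, Multiset.replicate_one]
  have h3 : e.powerset = e.powerset.filter (fun t => t ≠ 0) + {0} := by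
    rw [← h2]; exact h.symm
  conv_rhs => rw [h3]
  rw [Multiset.map_add, Multiset.sum_add, Multiset.map_singleton, Multiset.sum_singleton]
  ring

lemma cons_expand (k : ℤ) (c : ℕ) (e : Multiset ℕ) :
    hM k (c ::ₘ e) = hM k e +
      (e.powerset.map
        (fun t : Multiset ℕ => (-1 : ℚ) ^ (Multiset.card t) *
          hh k ((c : ℤ) + t.sum - Multiset.card t))).sum := by
  show ((((c ::ₘ e).powerset).filter _).map _).sum = _
  rw [powerset_cons, Multiset.filter_add, Multiset.map_add, Multiset.sum_add]
  congr 1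
  rw [Multiset.filter_eq_self.mpr (fun x hx => by
      obtain ⟨t, _, rfl⟩ := Multiset.mem_map.mp hx; exact Multiset.cons_ne_zero),
    Multiset.map_map]
  refine congrArg _ (Multiset.map_congr rfl fun t ht => ?_)
  show (-1 : ℚ) ^ (Multiset.card (c ::ₘ t) - 1) *
      hh k (((c ::ₘ t).sum : ℤ) - Multiset.card (c ::ₘ t) + 1) = _
  rw [Multiset.card_cons, Multiset.sum_cons, Nat.add_sub_cancel]
  congr 1
  push_cast
  ring

open Multiset

lemma msum_sub {α : Type*} (s : Multiset α) (f g : α → ℚ) :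
    (s.map (fun x => f x - g x)).sum = (s.map f).sum - (s.map g).sum := by
  induction s using Multiset.induction with
  | empty => simp
  | cons a t ih => simp only [Multiset.map_cons, Multiset.sum_cons, ih]; ring

lemma msum_neg {α : Type*} (s : Multiset α) (f : α → ℚ) :
    (s.map (fun x => -f x)).sum = -(s.map f).sum := by
  induction s using Multiset.induction with
  | empty => simp
  | cons a t ih => simp only [Multiset.map_cons, Multiset.sum_cons, ih]; ring

lemma powerset_compl_map (e : Multiset ℕ) : e.powerset.map (fun J => e - J) = e.powerset := by
  induction e using Multiset.induction with
  | empty => simp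
  | cons a s ih =>
    rw [powerset_cons, Multiset.map_add]
    have h1 : s.powerset.map (fun J => a ::ₘ s - J) = s.powerset.map (cons a) := by
      rw [Multiset.map_congr rfl
        (fun J hJ => (by rw [cons_sub_of_le a (mem_powerset.mp hJ)]; rfl) :
          ∀ J ∈ s.powerset, a ::ₘ s - J = ((cons a) ∘ fun J => s - J) J),
        ← Multiset.map_map, ih]
    have h2 : (s.powerset.map (cons a)).map (fun J => a ::ₘ s - J) = s.powerset := by
      rw [Multiset.map_map,
        Multiset.map_congr rfl
          (fun J hJ => (by simp [Multiset.sub_cons]) :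
            ∀ J ∈ s.powerset, ((fun J => a ::ₘ s - J) ∘ cons a) J = s - J), ih]
    rw [h1, h2, add_comm]

lemma keyK (g : Multiset ℕ → ℚ) (e : Multiset ℕ) :
    (e.powerset.map (fun J =>
      (((e - J).powerset).map (fun t => (-1 : ℚ) ^ (Multiset.card t) * g (J + t))).sum)).sum
      = g 0 := by
  induction e using Multiset.induction with
  | empty => simp
  | cons a s ih =>
    rw [powerset_cons, Multiset.map_add, Multiset.sum_add, Multiset.map_map]
    have h1 : ∀ J ∈ s.powerset,
        (((a ::ₘ s - J).powerset).map (fun t => (-1 : ℚ) ^ (Multiset.card t) * g (J + t))).sum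
        = (fun J => (((s - J).powerset).map
              (fun t => (-1 : ℚ) ^ (Multiset.card t) * g (J + t))).sum) J
          - (fun J => (((s - J).powerset).map
              (fun t => (-1 : ℚ) ^ (Multiset.card t) * g (a ::ₘ (J + t)))).sum) J := by
      intro J hJ
      rw [cons_sub_of_le a (mem_powerset.mp hJ), powerset_cons, Multiset.map_add,
        Multiset.sum_add, Multiset.map_map]
      simp only [sub_eq_add_neg, ← msum_neg]
      congr 1
      refine congrArg _ (Multiset.map_congr rfl fun t ht => ?_)
      show (-1 : ℚ) ^ (Multiset.card (a ::ₘ t)) * g (J + (a ::ₘ t)) = _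
      have hc : J + (a ::ₘ t) = a ::ₘ (J + t) := by
        rw [add_comm, cons_add, add_comm]
      rw [hc, Multiset.card_cons]
      ring
    have h2 : ∀ J ∈ s.powerset,
        ((fun J =>
          (((a ::ₘ s - J).powerset).map (fun t => (-1 : ℚ) ^ (Multiset.card t) * g (J + t))).sum)
          ∘ cons a) J
        = (fun J => (((s - J).powerset).map
            (fun t => (-1 : ℚ) ^ (Multiset.card t) * g (a ::ₘ (J + t)))).sum) J := by
      intro J hJ
      show (((a ::ₘ s - (a ::ₘ J)).powerset).map
        (fun t => (-1 : ℚ) ^ (Multiset.card t) * g ((a ::ₘ J) + t))).sum = _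
      have hsub : a ::ₘ s - (a ::ₘ J) = s - J := by simp [Multiset.sub_cons]
      rw [hsub]
      exact congrArg _ (Multiset.map_congr rfl fun t ht => by rw [cons_add])
    rw [Multiset.map_congr rfl h1, Multiset.map_congr rfl h2, msum_sub]
    rw [ih]
    ring

/-- The inductive identity
`h_{k;(c,e)} = h_{k;c} + ∑_{∅≠J⊆e} ( h_{k;e_J} - h_{k;(c+|e_J|-#J, e_{J^c})} )`. -/
theorem h_inductive (k : ℤ) (hk : -1 ≤ k) (c : ℕ) (e : Multiset ℕ)
    (hpos : ∀ J ∈ e.powerset, Multiset.card J ≤ c + J.sum) :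
    hM k (c ::ₘ e) =
      hh k c +
        ((e.powerset.filter (fun J => J ≠ 0)).map
          (fun J => hM k J - hM k ((c + J.sum - Multiset.card J) ::ₘ (e - J)))).sum := by
  classical
  set g : Multiset ℕ → ℚ :=
    fun u => hh k ((c : ℤ) + u.sum - Multiset.card u) with hg
  have hterm : ∀ J ∈ e.powerset.filter (fun J => J ≠ 0),
      (fun J => hM k J - hM k ((c + J.sum - Multiset.card J) ::ₘ (e - J))) J
      = (fun J => (fun J => hM k J) J - (fun J => hM k (e - J)) J) J
        - (fun J => (((e - J).powerset).map
            (fun t => (-1 : ℚ) ^ (Multiset.card t) * g (J + t))).sum) J := by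
    intro J hJ
    have hJp : J ∈ e.powerset := (Multiset.mem_filter.mp hJ).1
    have hle : Multiset.card J ≤ c + J.sum := hpos J hJp
    show hM k J - hM k _ = _
    rw [cons_expand k (c + J.sum - Multiset.card J) (e - J)]
    have hB : ((e - J).powerset.map
        (fun t : Multiset ℕ => (-1 : ℚ) ^ (Multiset.card t) *
          hh k (((c + J.sum - Multiset.card J : ℕ) : ℤ) + t.sum - Multiset.card t))).sum
        = (((e - J).powerset).map
            (fun t => (-1 : ℚ) ^ (Multiset.card t) * g (J + t))).sum := by
      refine congrArg _ (Multiset.map_congr rfl fun t ht => ?_)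
      congr 1
      rw [hg]
      show hh k _ = hh k _
      congr 1
      rw [Multiset.sum_add, Multiset.card_add, Nat.cast_sub hle]
      push_cast
      ring
    rw [hB]
    ring
  rw [Multiset.map_congr rfl hterm, msum_sub, msum_sub]
  have p1 : ((e.powerset.filter (fun J => J ≠ 0)).map (fun J => hM k J)).sum
      = (e.powerset.map (fun J => hM k J)).sum - 0 := by
    rw [filter_ne_sum, hM_zero]
  have p2 : ((e.powerset.filter (fun J => J ≠ 0)).map (fun J => hM k (e - J))).sum
      = (e.powerset.map (fun J => hM k J)).sum - hM k e := by
    rw [filter_ne_sum e (fun J => hM k (e - J))]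
    congr 1
    · conv_rhs => rw [← powerset_compl_map e, Multiset.map_map]
      rfl
    · simp
  have p3 : ((e.powerset.filter (fun J => J ≠ 0)).map
      (fun J => (((e - J).powerset).map
        (fun t => (-1 : ℚ) ^ (Multiset.card t) * g (J + t))).sum)).sum
      = hh k c - (e.powerset.map
          (fun t : Multiset ℕ => (-1 : ℚ) ^ (Multiset.card t) *
            hh k ((c : ℤ) + t.sum - Multiset.card t))).sum := by
    rw [filter_ne_sum e (fun J => (((e - J).powerset).map
        (fun t => (-1 : ℚ) ^ (Multiset.card t) * g (J + t))).sum), keyK g e]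
    congr 1
    all_goals simp [hg]
  rw [p1, p2, p3, cons_expand k c e]
  ring
end

section
/- Assume the equality of generating functions of finite sets: for weights a₁,...,aₙ, b with each weight in (0,1] and nonempty admissible blocks, the set of admissible partitions satisfies P(b, a₁,...,aₙ) = ⊔_{J ⊆ {1,...,n}, b + ∑_{j∈J}a_j ≤ 1} P(merge(b, a_J), a_{J^c}), where merge(b, a_J) replaces the entries indexed by J and b by the single entry b + ∑_{j∈J}a_j. That is, every admissible partition of (b, a₁,...,aₙ) arises uniquely by choosing the block J containing b and an admissible partition of the remaining entries. -/
open Finset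

namespace AdmPart

variable {n : ℕ}

abbrev P0 (J : Finset (Fin n)) : Finset (Option (Fin n)) := insert none (J.image some)

lemma none_not_mem_image (s : Finset (Fin n)) : (none : Option (Fin n)) ∉ s.image some := by
  simp

lemma image_some_inj : Function.Injective (Finset.image (some : Fin n → Option (Fin n))) :=
  Finset.image_injective (Option.some_injective _)

lemma sum_image_some (w : Option (Fin n) → ℝ) (s : Finset (Fin n)) :
    ∑ i ∈ s.image some, w i = ∑ j ∈ s, w (some j) :=
  Finset.sum_image (fun x _ y _ h => Option.some_injective _ h)

def mergedPartition (J : Finset (Fin n)) (q : Finpartition (Jᶜ : Finset (Fin n))) :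
    Finpartition (Finset.univ : Finset (Option (Fin n))) where
  parts := insert (P0 J) (q.parts.image (Finset.image some))
  supIndep := by
    rw [Finset.supIndep_iff_pairwiseDisjoint]
    intro x hx y hy hxy
    simp only [coe_insert, Set.mem_insert_iff, mem_coe, Finset.mem_image] at hx hy
    have hdisj : ∀ s ∈ q.parts, Disjoint (P0 J) (s.image some) := by
      intro s hs
      rw [Finset.disjoint_left]
      rintro z hz hz'
      simp only [Finset.mem_image] at hz'
      obtain ⟨j, hj, rfl⟩ := hz'
      have hjc : j ∈ Jᶜ := q.le hs hj
      simp only [P0, Finset.mem_insert, Finset.mem_image] at hz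
      rcases hz with h | ⟨j', hj', hjj⟩
      · cases h
      · cases Option.some_injective _ hjj
        exact (Finset.mem_compl.mp hjc) hj'
    rcases hx with rfl | ⟨s, hs, rfl⟩
    · rcases hy with rfl | ⟨t, ht, rfl⟩
      · exact absurd rfl hxy
      · exact hdisj t ht
    · rcases hy with rfl | ⟨t, ht, rfl⟩
      · exact (hdisj s hs).symm
      · have hst : s ≠ t := fun h => hxy (by rw [h])
        have := q.disjoint hs ht hst
        simp only [Function.onFun, id] at this ⊢
        rw [Finset.disjoint_left] at this ⊢
        rintro z hz hz'
        simp only [Finset.mem_image] at hz hz'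
        obtain ⟨j, hj, rfl⟩ := hz
        obtain ⟨j', hj', hjj⟩ := hz'
        cases Option.some_injective _ hjj
        exact this hj hj'
  sup_parts := by
    apply Finset.Subset.antisymm (Finset.subset_univ _)
    intro x _
    rw [Finset.mem_sup]
    match x with
    | none => exact ⟨P0 J, Finset.mem_insert_self _ _, Finset.mem_insert_self _ _⟩
    | some j =>
      by_cases hj : j ∈ J
      · exact ⟨P0 J, Finset.mem_insert_self _ _,
          Finset.mem_insert_of_mem (Finset.mem_image_of_mem _ hj)⟩
      · obtain ⟨s, hs, hjs⟩ := q.exists_mem (Finset.mem_compl.mpr hj)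
        exact ⟨s.image some, Finset.mem_insert_of_mem (Finset.mem_image_of_mem _ hs),
          Finset.mem_image_of_mem _ hjs⟩
  bot_notMem := by
    simp only [Finset.bot_eq_empty, Finset.mem_insert, Finset.mem_image, not_or]
    refine ⟨fun h => ?_, ?_⟩
    · exact Finset.insert_ne_empty _ _ h.symm
    · rintro ⟨s, hs, h⟩
      obtain ⟨j, hj⟩ := q.nonempty_of_mem_parts hs
      have := Finset.mem_image_of_mem some hj
      rw [h] at this
      exact Finset.notMem_empty _ this

lemma mergedPartition_parts (J : Finset (Fin n)) (q : Finpartition (Jᶜ : Finset (Fin n))) :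
    (mergedPartition J q).parts = insert (P0 J) (q.parts.image (Finset.image some)) := rfl

end AdmPart

namespace AdmPart

variable {n : ℕ} (a : Fin n → ℝ) (b : ℝ)

def g : (Σ J : {J : Finset (Fin n) // b + ∑ j ∈ J, a j ≤ 1},
          {q : Finpartition (J.1ᶜ : Finset (Fin n)) // ∀ s ∈ q.parts, ∑ j ∈ s, a j ≤ 1}) →
        {p : Finpartition (Finset.univ : Finset (Option (Fin n))) //
          ∀ s ∈ p.parts, ∑ i ∈ s, Option.elim i b a ≤ 1} :=
  fun x => ⟨mergedPartition x.1.1 x.2.1, by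
    obtain ⟨⟨J, hJ⟩, ⟨q, hq⟩⟩ := x
    intro s hs
    rw [mergedPartition_parts, Finset.mem_insert] at hs
    rcases hs with rfl | hs
    · rw [Finset.sum_insert (none_not_mem_image J), sum_image_some]
      simpa using hJ
    · simp only [Finset.mem_image] at hs
      obtain ⟨t, ht, rfl⟩ := hs
      rw [sum_image_some]
      simpa using hq t ht⟩

lemma g_injective : Function.Injective (g a b) := by
  rintro ⟨⟨J, hJ⟩, ⟨q, hq⟩⟩ ⟨⟨J', hJ'⟩, ⟨q', hq'⟩⟩ h
  have hparts : insert (P0 J) (q.parts.image (Finset.image some)) =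
      insert (P0 J') (q'.parts.image (Finset.image some)) := by
    have := congrArg (fun x => (Subtype.val x).parts) h
    simpa [g, mergedPartition_parts] using this
  have hnone : ∀ (s : Finset (Fin n)) (Q : Finpartition (sᶜ : Finset (Fin n)))
      (t : Finset (Option (Fin n))), t ∈ Q.parts.image (Finset.image some) → none ∉ t := by
    rintro s Q t ht
    simp only [Finset.mem_image] at ht
    obtain ⟨u, _, rfl⟩ := ht
    exact none_not_mem_image u
  have hP0 : P0 J = P0 J' := by
    have h1 : P0 J ∈ insert (P0 J') (q'.parts.image (Finset.image some)) := by
      rw [← hparts]; exact Finset.mem_insert_self _ _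
    rcases Finset.mem_insert.mp h1 with h2 | h2
    · exact h2
    · exact absurd (Finset.mem_insert_self none (J.image some)) (hnone J' q' _ h2)
  have hJJ' : J = J' := by
    apply image_some_inj
    have := congrArg (fun s => Finset.erase s none) hP0
    simpa [Finset.erase_insert (none_not_mem_image J),
      Finset.erase_insert (none_not_mem_image J')] using this
  subst hJJ'
  have hQ : q.parts.image (Finset.image some) = q'.parts.image (Finset.image some) := by
    have h1 : P0 J ∉ q.parts.image (Finset.image some) :=
      fun hm => hnone J q _ hm (Finset.mem_insert_self _ _)
    have h2 : P0 J ∉ q'.parts.image (Finset.image some) :=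
      fun hm => hnone J q' _ hm (Finset.mem_insert_self _ _)
    rw [← Finset.erase_insert h1, ← Finset.erase_insert h2, hparts]
  have hqq' : q = q' := by
    apply Finpartition.ext
    exact Finset.image_injective image_some_inj hQ
  subst hqq'
  rfl

lemma g_surjective : Function.Surjective (g a b) := by
  rintro ⟨p, hp⟩
  obtain ⟨t, ht, hnt⟩ := p.exists_mem (Finset.mem_univ none)
  set J : Finset (Fin n) := (t.erase none).preimage some
    ((Option.some_injective _).injOn) with hJdef
  have hmemJ : ∀ j : Fin n, j ∈ J ↔ some j ∈ t := by
    intro j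
    simp [hJdef, Finset.mem_preimage, Finset.mem_erase]
  have ht_eq : t = P0 J := by
    ext x
    match x with
    | none => simp [P0, hnt]
    | some j => simp [P0, hmemJ j]
  have hJ : b + ∑ j ∈ J, a j ≤ 1 := by
    have := hp t ht
    rw [ht_eq] at this
    rw [Finset.sum_insert (none_not_mem_image J), sum_image_some] at this
    simpa using this
  -- every other part avoids none
  have hnone_not : ∀ s ∈ p.parts.erase t, (none : Option (Fin n)) ∉ s := by
    intro s hs hns
    have hst : s ≠ t := (Finset.mem_erase.mp hs).1
    have hd := p.disjoint (Finset.mem_coe.mpr (Finset.mem_of_mem_erase hs))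
      (Finset.mem_coe.mpr ht) hst
    exact Finset.disjoint_left.mp hd hns hnt
  have himg : ∀ s ∈ p.parts.erase t,
      (s.preimage some ((Option.some_injective _).injOn)).image some = s := by
    intro s hs
    ext x
    match x with
    | none => simp [hnone_not s hs]
    | some j => simp [Finset.mem_preimage]
  -- build q
  refine ⟨⟨⟨J, hJ⟩, ⟨⟨?_, ?_, ?_, ?_⟩, ?_⟩⟩, ?_⟩
  · exact (p.parts.erase t).image
      (fun s => s.preimage some ((Option.some_injective _).injOn))
  · -- supIndep
    rw [Finset.supIndep_iff_pairwiseDisjoint]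
    intro x hx y hy hxy
    simp only [Finset.coe_image, Set.mem_image, Finset.mem_coe] at hx hy
    obtain ⟨s, hs, rfl⟩ := hx
    obtain ⟨s', hs', rfl⟩ := hy
    have hss' : s ≠ s' := fun h => hxy (by rw [h])
    have hd := p.disjoint (Finset.mem_coe.mpr (Finset.mem_of_mem_erase hs))
      (Finset.mem_coe.mpr (Finset.mem_of_mem_erase hs')) hss'
    simp only [Function.onFun, id] at hd ⊢
    rw [Finset.disjoint_left] at hd ⊢
    intro j hj hj'
    rw [Finset.mem_preimage] at hj hj'
    exact hd hj hj'
  · -- sup_parts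
    ext j
    rw [Finset.mem_sup]
    constructor
    · rintro ⟨s', hs', hj⟩
      simp only [Finset.mem_image] at hs'
      obtain ⟨s, hs, rfl⟩ := hs'
      rw [id, Finset.mem_preimage] at hj
      have hst : s ≠ t := (Finset.mem_erase.mp hs).1
      have hd := p.disjoint (Finset.mem_coe.mpr (Finset.mem_of_mem_erase hs))
        (Finset.mem_coe.mpr ht) hst
      have : some j ∉ t := Finset.disjoint_left.mp hd hj
      show j ∈ (Jᶜ : Finset (Fin n))
      rw [Finset.mem_compl]
      exact fun hjJ => this ((hmemJ j).mp hjJ)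
    · intro hj
      have hjJ : some j ∉ t := by
        intro hc
        exact (Finset.mem_compl.mp hj) ((hmemJ j).mpr hc)
      obtain ⟨s, hs, hjs⟩ := p.exists_mem (Finset.mem_univ (some j))
      have hst : s ≠ t := fun h => hjJ (h ▸ hjs)
      exact ⟨s.preimage some ((Option.some_injective _).injOn),
        Finset.mem_image_of_mem _ (Finset.mem_erase.mpr ⟨hst, hs⟩),
        Finset.mem_preimage.mpr hjs⟩
  · -- not_bot_mem
    simp only [Finset.bot_eq_empty, Finset.mem_image, not_exists]
    rintro s ⟨hs, hcon⟩
    obtain ⟨x, hx⟩ := p.nonempty_of_mem_parts (Finset.mem_of_mem_erase hs)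
    match x, hx with
    | none, hx => exact hnone_not s hs hx
    | some j, hx =>
      have : j ∈ s.preimage some ((Option.some_injective _).injOn) :=
        Finset.mem_preimage.mpr hx
      rw [hcon] at this
      exact Finset.notMem_empty _ this
  · -- admissibility of q
    intro s' hs'
    simp only [Finset.mem_image] at hs'
    obtain ⟨s, hs, rfl⟩ := hs'
    have h1 : ∑ j ∈ s.preimage some ((Option.some_injective _).injOn), a j
        = ∑ i ∈ s, Option.elim i b a := by
      conv_rhs => rw [← himg s hs]
      rw [sum_image_some]
      rfl
    rw [h1]
    exact hp s (Finset.mem_of_mem_erase hs)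
  · -- g applied gives back p
    apply Subtype.ext
    show (mergedPartition _ _ : Finpartition _) = p
    apply Finpartition.ext
    rw [mergedPartition_parts, Finset.image_image]
    have himg2 : (p.parts.erase t).image
        ((Finset.image some) ∘ (fun s => s.preimage some ((Option.some_injective _).injOn)))
        = (p.parts.erase t).image id := Finset.image_congr (fun s hs => himg s hs)
    rw [himg2, Finset.image_id, ← ht_eq, Finset.insert_erase ht]

end AdmPart


/-- Every admissible partition of the weighted points `(b, a₁, …, aₙ)` arises uniquely
from the choice of the block `J` containing `b` (with `b + ∑_{j∈J} a_j ≤ 1`) together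
with an admissible partition of the remaining points:
`P(b, a₁,…,aₙ) = ⊔_J P(merge(b, a_J), a_{J^c})`. -/
theorem admissible_partition_decomposition (n : ℕ) (a : Fin n → ℝ) (b : ℝ)
    (ha : ∀ i, 0 < a i ∧ a i ≤ 1) (hb : 0 < b ∧ b ≤ 1) :
    ∃ e : {p : Finpartition (Finset.univ : Finset (Option (Fin n))) //
            ∀ s ∈ p.parts, ∑ i ∈ s, Option.elim i b a ≤ 1} ≃
          Σ J : {J : Finset (Fin n) // b + ∑ j ∈ J, a j ≤ 1},
            {q : Finpartition (J.1ᶜ : Finset (Fin n)) //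
              ∀ s ∈ q.parts, ∑ j ∈ s, a j ≤ 1},
      ∀ p : {p : Finpartition (Finset.univ : Finset (Option (Fin n))) //
              ∀ s ∈ p.parts, ∑ i ∈ s, Option.elim i b a ≤ 1},
        insert none (((e p).1.1).image some) ∈ p.1.parts ∧
        ∀ s ∈ ((e p).2.1).parts, s.image some ∈ p.1.parts := by
  have hbij : Function.Bijective (AdmPart.g a b) :=
    ⟨AdmPart.g_injective a b, AdmPart.g_surjective a b⟩
  refine ⟨(Equiv.ofBijective _ hbij).symm, fun p => ?_⟩
  set e := (Equiv.ofBijective _ hbij).symm with he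
  have hgp : AdmPart.g a b (e p) = p := (Equiv.ofBijective _ hbij).apply_symm_apply p
  have h1 : p.1.parts = insert (AdmPart.P0 (e p).1.1)
      (((e p).2.1).parts.image (Finset.image some)) := by
    conv_lhs => rw [← hgp]
    rfl
  constructor
  · rw [h1]
    exact Finset.mem_insert_self _ _
  · intro s hs
    rw [h1]
    exact Finset.mem_insert_of_mem (Finset.mem_image_of_mem _ hs)
end
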